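/- Let H' be a 6-partite intersecting hypergraph with 8 edges and τ(H') = 4, and let K be the hypergraph on the degree-3 vertices of H' with edges {A ∩ V(K) : A ∈ H'} (multiplicities allowed). Then every edge of K has size at most |V(K)| − 2. -/
import Mathlib

def Intersecting {V : Type*} (E : Finset (Finset V)) : Prop :=
  ∀ e ∈ E, ∀ f ∈ E, ∃ v, v ∈ e ∧ v ∈ f

def IsCover {V : Type*} (E : Finset (Finset V)) (C : Finset V) : Prop :=
  ∀ e ∈ E, ∃ v ∈ C, v ∈ e

noncomputable def coverNum {V : Type*} (E : Finset (Finset V)) : ℕ :=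
  sInf {n | ∃ C : Finset V, IsCover E C ∧ C.card = n}

def Partite {V : Type*} (r : ℕ) (part : V → Fin r) (E : Finset (Finset V)) : Prop :=
  ∀ e ∈ E, ∀ i : Fin r, (e.filter (fun v => part v = i)).card = 1

open Classical in
noncomputable def deg {V : Type*} (E : Finset (Finset V)) (v : V) : ℕ :=
  (E.filter (fun e => v ∈ e)).card

section Helpers

variable {V : Type*} [DecidableEq V]

lemma deg_eq (E : Finset (Finset V)) (v : V) :
    deg E v = (E.filter (fun e => v ∈ e)).card := by
  rw [deg]; congr

lemma deg_eq_sum (E : Finset (Finset V)) (v : V) :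
    deg E v = ∑ e ∈ E, if v ∈ e then 1 else 0 := by
  rw [deg_eq, Finset.card_filter]

lemma sum_deg (E : Finset (Finset V)) :
    ∑ v ∈ E.biUnion id, deg E v = ∑ e ∈ E, e.card := by
  simp_rw [deg_eq_sum]
  rw [Finset.sum_comm]
  refine Finset.sum_congr rfl fun e he => ?_
  rw [← Finset.card_filter, Finset.filter_mem_eq_inter]
  have h : e ⊆ E.biUnion id := Finset.subset_biUnion_of_mem id he
  rw [Finset.inter_eq_right.mpr h]

lemma sum_deg_class (part : V → Fin 6) (E : Finset (Finset V)) (i : Fin 6)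
    (hp : ∀ e ∈ E, (e.filter (fun v => part v = i)).card = 1) :
    ∑ v ∈ (E.biUnion id).filter (fun v => part v = i), deg E v = E.card := by
  simp_rw [deg_eq_sum]
  rw [Finset.sum_comm]
  rw [Finset.sum_congr rfl (fun e (he : e ∈ E) => ?_), Finset.sum_const, smul_eq_mul, mul_one]
  rw [← Finset.card_filter]
  have h : ((E.biUnion id).filter (fun v => part v = i)).filter (fun v => v ∈ e)
      = e.filter (fun v => part v = i) := by
    ext v
    simp only [Finset.mem_filter, Finset.mem_biUnion, id]
    constructor
    · rintro ⟨⟨_, hpv⟩, hve⟩; exact ⟨hve, hpv⟩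
    · rintro ⟨hve, hpv⟩; exact ⟨⟨⟨e, he, hve⟩, hpv⟩, hve⟩
  rw [h, hp e he]

lemma sum_deg_sq (E : Finset (Finset V)) (hi : Intersecting E)
    (h6 : ∀ e ∈ E, e.card = 6) :
    E.card * (E.card + 5) ≤ ∑ v ∈ E.biUnion id, deg E v * deg E v := by
  have inner : ∀ e ∈ E, ∀ f ∈ E,
      ∑ v ∈ E.biUnion id, (if v ∈ e then 1 else 0) * (if v ∈ f then 1 else 0)
        = (e ∩ f).card := by
    intro e he f hf
    have hpt : ∀ v, (if v ∈ e then (1:ℕ) else 0) * (if v ∈ f then 1 else 0)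
        = if v ∈ e ∩ f then 1 else 0 := by
      intro v; by_cases h1 : v ∈ e <;> by_cases h2 : v ∈ f <;> simp [h1, h2]
    simp_rw [hpt]
    rw [← Finset.card_filter, Finset.filter_mem_eq_inter, Finset.inter_eq_right.mpr]
    exact fun v hv => Finset.mem_biUnion.mpr ⟨e, he, (Finset.mem_inter.mp hv).1⟩
  calc E.card * (E.card + 5)
      = ∑ e ∈ E, ∑ f ∈ E, (if e = f then 6 else 1) := by
        rw [Finset.sum_congr rfl (fun e (he : e ∈ E) => ?_), Finset.sum_const, smul_eq_mul]
        have : ∀ f ∈ E, (if e = f then (6:ℕ) else 1) = 1 + (if e = f then 5 else 0) := by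
          intro f _; by_cases h : e = f <;> simp [h]
        rw [Finset.sum_congr rfl this, Finset.sum_add_distrib, Finset.sum_const,
          Finset.sum_ite_eq, if_pos he, smul_eq_mul, mul_one]
    _ ≤ ∑ e ∈ E, ∑ f ∈ E, (e ∩ f).card := by
        refine Finset.sum_le_sum fun e he => Finset.sum_le_sum fun f hf => ?_
        by_cases h : e = f
        · subst h; simp [h6 e he]
        · rw [if_neg h]
          obtain ⟨v, hv1, hv2⟩ := hi e he f hf
          exact Finset.card_pos.mpr ⟨v, Finset.mem_inter.mpr ⟨hv1, hv2⟩⟩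
    _ = ∑ e ∈ E, ∑ f ∈ E, ∑ v ∈ E.biUnion id,
          (if v ∈ e then 1 else 0) * (if v ∈ f then 1 else 0) :=
        (Finset.sum_congr rfl fun e he => Finset.sum_congr rfl
          fun f hf => (inner e he f hf).symm)
    _ = ∑ e ∈ E, ∑ v ∈ E.biUnion id, ∑ f ∈ E,
          (if v ∈ e then 1 else 0) * (if v ∈ f then 1 else 0) :=
        Finset.sum_congr rfl fun e _ => Finset.sum_comm
    _ = ∑ v ∈ E.biUnion id, ∑ e ∈ E, ∑ f ∈ E,
          (if v ∈ e then 1 else 0) * (if v ∈ f then 1 else 0) := Finset.sum_comm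
    _ = ∑ v ∈ E.biUnion id, deg E v * deg E v := by
        refine Finset.sum_congr rfl fun v _ => ?_
        rw [deg_eq_sum, Finset.sum_mul_sum]

lemma two_deg3 (part : V → Fin 6) (E' : Finset (Finset V)) (hp : Partite 6 part E')
    (hi : Intersecting E') (h7 : E'.card = 7) (hΔ : ∀ v, deg E' v ≤ 3) :
    2 ≤ ((E'.biUnion id).filter (fun v => deg E' v = 3)).card := by
  set W := E'.biUnion id with hW
  have h6 : ∀ e ∈ E', e.card = 6 := by
    intro e he
    rw [Finset.card_eq_sum_card_fiberwise (f := part) (t := Finset.univ) (fun x _ => Finset.mem_univ _)]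
    rw [Finset.sum_congr rfl (fun i _ => hp e he i)]
    simp
  have hd1 : ∀ v ∈ W, 1 ≤ deg E' v := by
    intro v hv
    obtain ⟨e, he, hve⟩ := Finset.mem_biUnion.mp hv
    rw [deg_eq]
    exact Finset.card_pos.mpr ⟨e, Finset.mem_filter.mpr ⟨he, hve⟩⟩
  have hsum : ∑ v ∈ W, deg E' v = 42 := by
    rw [hW, sum_deg, Finset.sum_congr rfl h6, Finset.sum_const, h7]
    norm_num
  have hsq : 84 ≤ ∑ v ∈ W, deg E' v * deg E' v := by
    have := sum_deg_sq E' hi h6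
    rw [h7] at this; exact this
  set k := (W.filter (fun v => deg E' v = 3)).card with hk
  set s := (W.filter (fun v => deg E' v = 1)).card with hs
  -- s ≤ 3 * k
  have hsk : s ≤ 3 * k := by
    have hpt : ∀ v ∈ W, deg E' v * deg E' v + (if deg E' v = 1 then 1 else 0)
        ≤ 2 * deg E' v + 3 * (if deg E' v = 3 then 1 else 0) := by
      intro v hv
      have h1 := hd1 v hv
      have h3 := hΔ v
      interval_cases h : (deg E' v) <;> simp
    have hle := Finset.sum_le_sum hpt
    rw [Finset.sum_add_distrib, Finset.sum_add_distrib] at hle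
    have ha : ∑ v ∈ W, 2 * deg E' v = 84 := by rw [← Finset.mul_sum, hsum]; norm_num
    have hb : ∑ v ∈ W, 3 * (if deg E' v = 3 then (1:ℕ) else 0) = 3 * k := by
      rw [← Finset.mul_sum, hk, Finset.card_filter]
    have hc : s = ∑ v ∈ W, (if deg E' v = 1 then (1:ℕ) else 0) := by
      rw [hs, Finset.card_filter]
    omega
  -- every class contains a vertex of odd degree
  have hodd : ∀ i : Fin 6, ∃ v ∈ W, part v = i ∧ (deg E' v = 1 ∨ deg E' v = 3) := by
    intro i
    by_contra hcon
    push_neg at hcon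
    have hcs : ∑ v ∈ W.filter (fun v => part v = i), deg E' v = 7 := by
      rw [hW, sum_deg_class part E' i (fun e he => hp e he i), h7]
    have hall : ∀ v ∈ W.filter (fun v => part v = i), deg E' v = 2 := by
      intro v hv
      obtain ⟨hvW, hpi⟩ := Finset.mem_filter.mp hv
      have h1 := hd1 v hvW
      have h3 := hΔ v
      have := hcon v hvW hpi
      omega
    rw [Finset.sum_congr rfl hall, Finset.sum_const, smul_eq_mul] at hcs
    omega
  -- 6 ≤ s + k
  have h6sk : 6 ≤ s + k := by
    have himg : (Finset.univ : Finset (Fin 6)) ⊆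
        (W.filter (fun v => deg E' v = 1 ∨ deg E' v = 3)).image part := by
      intro i _
      obtain ⟨v, hvW, hpi, hd⟩ := hodd i
      exact Finset.mem_image.mpr ⟨v, Finset.mem_filter.mpr ⟨hvW, hd⟩, hpi⟩
    have h1 := Finset.card_le_card himg
    have h2 := Finset.card_image_le (s := W.filter (fun v => deg E' v = 1 ∨ deg E' v = 3)) (f := part)
    rw [Finset.card_univ, Fintype.card_fin] at h1
    have h3 : W.filter (fun v => deg E' v = 1 ∨ deg E' v = 3)
        ⊆ W.filter (fun v => deg E' v = 1) ∪ W.filter (fun v => deg E' v = 3) := by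
      intro v hv
      obtain ⟨hvW, hd⟩ := Finset.mem_filter.mp hv
      rcases hd with hd | hd
      · exact Finset.mem_union_left _ (Finset.mem_filter.mpr ⟨hvW, hd⟩)
      · exact Finset.mem_union_right _ (Finset.mem_filter.mpr ⟨hvW, hd⟩)
    have h4 := Finset.card_le_card h3
    have h5 := Finset.card_union_le (W.filter (fun v => deg E' v = 1))
      (W.filter (fun v => deg E' v = 3))
    omega
  omega

lemma cover_two (F : Finset (Finset V)) (hi : Intersecting F) (h2 : F.card ≤ 2) :
    ∃ C : Finset V, IsCover F C ∧ C.card ≤ 1 := by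
  rcases Finset.eq_empty_or_nonempty F with rfl | ⟨e1, he1⟩
  · exact ⟨∅, fun e he => absurd he (by simp), by simp⟩
  rcases Finset.eq_empty_or_nonempty (F.erase e1) with hF | ⟨e2, he2⟩
  · obtain ⟨a, ha, -⟩ := hi e1 he1 e1 he1
    refine ⟨{a}, fun e he => ⟨a, Finset.mem_singleton_self a, ?_⟩, by simp⟩
    have he' : e = e1 := by
      by_contra hne
      exact absurd (Finset.mem_erase.mpr ⟨hne, he⟩) (by simp [hF])
    rwa [he']
  · have he2F := Finset.mem_of_mem_erase he2
    have hne : e2 ≠ e1 := (Finset.mem_erase.mp he2).1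
    obtain ⟨a, ha1, ha2⟩ := hi e1 he1 e2 he2F
    refine ⟨{a}, fun e he => ⟨a, Finset.mem_singleton_self a, ?_⟩, by simp⟩
    have hsub : {e1, e2} ⊆ F := by
      intro x hx
      rcases Finset.mem_insert.mp hx with rfl | hx
      · exact he1
      · rw [Finset.mem_singleton.mp hx]; exact he2F
    have hcard : F.card ≤ ({e1, e2} : Finset (Finset V)).card := by
      rw [Finset.card_pair (Ne.symm hne)]; exact h2
    have hFeq : F = {e1, e2} := (Finset.eq_of_subset_of_card_le hsub hcard).symm
    rw [hFeq] at he
    rcases Finset.mem_insert.mp he with rfl | he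
    · exact ha1
    · rw [Finset.mem_singleton.mp he]; exact ha2

lemma cover_four (F : Finset (Finset V)) (hi : Intersecting F) (h4 : F.card ≤ 4) :
    ∃ C : Finset V, IsCover F C ∧ C.card ≤ 2 := by
  by_cases h2 : F.card ≤ 2
  · obtain ⟨C, hC, hC1⟩ := cover_two F hi h2
    exact ⟨C, hC, by omega⟩
  · have h2' : 2 ≤ F.card := by omega
    have hFne : F.Nonempty := Finset.card_pos.mp (by omega)
    obtain ⟨e1, he1⟩ := hFne
    have hFne2 : (F.erase e1).Nonempty :=
      Finset.card_pos.mp (by rw [Finset.card_erase_of_mem he1]; omega)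
    obtain ⟨e2, he2⟩ := hFne2
    have he2F := Finset.mem_of_mem_erase he2
    obtain ⟨a, ha1, ha2⟩ := hi e1 he1 e2 he2F
    set F' := (F.erase e1).erase e2 with hF'
    have hF'sub : F' ⊆ F := fun x hx => Finset.mem_of_mem_erase (Finset.mem_of_mem_erase hx)
    have hF'card : F'.card ≤ 2 := by
      rw [hF', Finset.card_erase_of_mem he2, Finset.card_erase_of_mem he1]
      omega
    obtain ⟨C', hC', hC'1⟩ := cover_two F' (fun e he f hf => hi e (hF'sub he) f (hF'sub hf)) hF'card
    refine ⟨insert a C', ?_, le_trans (Finset.card_insert_le _ _) (by omega)⟩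
    intro e he
    by_cases h1 : e = e1
    · exact ⟨a, Finset.mem_insert_self _ _, h1 ▸ ha1⟩
    by_cases hh2 : e = e2
    · exact ⟨a, Finset.mem_insert_self _ _, hh2 ▸ ha2⟩
    · obtain ⟨u, hu, hue⟩ := hC' e (Finset.mem_erase.mpr ⟨hh2, Finset.mem_erase.mpr ⟨h1, he⟩⟩)
      exact ⟨u, Finset.mem_insert_of_mem hu, hue⟩

lemma degE_le (E : Finset (Finset V)) (hi : Intersecting E) (h8 : E.card = 8)
    (hτ : coverNum E = 4) : ∀ v, deg E v ≤ 3 := by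
  intro v
  by_contra hcon
  push_neg at hcon
  set F := E.filter (fun e => v ∉ e) with hF
  have hcard : deg E v + F.card = 8 := by
    rw [deg_eq, hF, ← h8]
    exact Finset.card_filter_add_card_filter_not _
  have hF4 : F.card ≤ 4 := by omega
  have hiF : Intersecting F := fun e he f hf =>
    hi e (Finset.filter_subset _ _ he) f (Finset.filter_subset _ _ hf)
  obtain ⟨C, hC, hC2⟩ := cover_four F hiF hF4
  have hcover : IsCover E (insert v C) := by
    intro e he
    by_cases hv : v ∈ e
    · exact ⟨v, Finset.mem_insert_self _ _, hv⟩
    · obtain ⟨u, hu, hue⟩ := hC e (Finset.mem_filter.mpr ⟨he, hv⟩)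
      exact ⟨u, Finset.mem_insert_of_mem hu, hue⟩
  have hle : coverNum E ≤ (insert v C).card :=
    Nat.sInf_le ⟨insert v C, hcover, rfl⟩
  have : (insert v C).card ≤ 3 := le_trans (Finset.card_insert_le _ _) (by omega)
  omega

end Helpers

theorem stmt17 {V : Type*} [DecidableEq V] (part : V → Fin 6)
    (E : Finset (Finset V)) (hp : Partite 6 part E) (hi : Intersecting E)
    (h8 : E.card = 8) (hτ : coverNum E = 4) :
    ∀ A ∈ E, (A.filter (fun v => deg E v = 3)).card + 2 ≤
      ((E.biUnion id).filter (fun v => deg E v = 3)).card := by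
  intro A hA
  have hΔ : ∀ v, deg E v ≤ 3 := degE_le E hi h8 hτ
  set E' := E.erase A with hE'
  have hsub : E' ⊆ E := Finset.erase_subset _ _
  have h7 : E'.card = 7 := by rw [hE', Finset.card_erase_of_mem hA, h8]
  have hmono : ∀ v, deg E' v ≤ deg E v := by
    intro v
    rw [deg_eq, deg_eq]
    exact Finset.card_le_card (Finset.filter_subset_filter _ hsub)
  have hΔ' : ∀ v, deg E' v ≤ 3 := fun v => le_trans (hmono v) (hΔ v)
  have hk := two_deg3 part E' (fun e he i => hp e (hsub he) i)
    (fun e he f hf => hi e (hsub he) f (hsub hf)) h7 hΔ'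
  set T := (E'.biUnion id).filter (fun v => deg E' v = 3) with hT
  have hT3 : ∀ v ∈ T, deg E v = 3 ∧ v ∉ A ∧ v ∈ E.biUnion id := by
    intro v hv
    obtain ⟨hvW, hd3⟩ := Finset.mem_filter.mp hv
    obtain ⟨e, heE', hve⟩ := Finset.mem_biUnion.mp hvW
    have hvE : v ∈ E.biUnion id := Finset.mem_biUnion.mpr ⟨e, hsub heE', hve⟩
    have hdege : deg E v = 3 := le_antisymm (hΔ v) (hd3 ▸ hmono v)
    have hvA : v ∉ A := by
      intro hvA
      have hAni : A ∉ E'.filter (fun e => v ∈ e) :=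
        fun h => absurd (Finset.mem_filter.mp h).1 (Finset.notMem_erase A E)
      have hins : insert A (E'.filter (fun e => v ∈ e)) ⊆ E.filter (fun e => v ∈ e) := by
        intro x hx
        rcases Finset.mem_insert.mp hx with rfl | hx
        · exact Finset.mem_filter.mpr ⟨hA, hvA⟩
        · obtain ⟨hx1, hx2⟩ := Finset.mem_filter.mp hx
          exact Finset.mem_filter.mpr ⟨hsub hx1, hx2⟩
      have h4 : deg E' v + 1 ≤ deg E v := by
        rw [deg_eq, deg_eq E v, ← Finset.card_insert_of_notMem hAni]
        exact Finset.card_le_card hins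
      have := hΔ v
      omega
    exact ⟨hdege, hvA, hvE⟩
  have hTsub : T ⊆ (E.biUnion id).filter (fun v => deg E v = 3) := fun v hv =>
    Finset.mem_filter.mpr ⟨(hT3 v hv).2.2, (hT3 v hv).1⟩
  have hAbi : A ⊆ E.biUnion id := fun v hv => Finset.mem_biUnion.mpr ⟨A, hA, hv⟩
  have hAsub : A.filter (fun v => deg E v = 3) ⊆ (E.biUnion id).filter (fun v => deg E v = 3) :=
    Finset.filter_subset_filter _ hAbi
  have hdisj : Disjoint (A.filter (fun v => deg E v = 3)) T := by
    rw [Finset.disjoint_right]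
    intro v hv hvA
    exact absurd (Finset.mem_filter.mp hvA).1 (hT3 v hv).2.1
  calc (A.filter (fun v => deg E v = 3)).card + 2
      ≤ (A.filter (fun v => deg E v = 3)).card + T.card := by omega
    _ = ((A.filter (fun v => deg E v = 3)) ∪ T).card :=
        (Finset.card_union_of_disjoint hdisj).symm
    _ ≤ ((E.biUnion id).filter (fun v => deg E v = 3)).card :=
        Finset.card_le_card (Finset.union_subset hAsub hTsub)
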